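/- Let p be a prime, q a power of p, and K a finite field with q^2 elements. Let n and m be positive integers with n·m = q+1 and m ≥ 2. Let f ∈ K[Y] be a squarefree polynomial of degree q with f(0) = 0, and suppose that Y^{q^2} - Y divides f^n - f^{n·q} in K[Y]. Then f = a₁·Y + a_q·Y^q for some nonzero a₁, a_q ∈ K; i.e. the coefficient of Y^i in f vanishes for all 2 ≤ i ≤ q-1, while the coefficients of Y and Y^q are nonzero. -/

import Mathlib

open Polynomial Finset

private lemma coeff_pow_top {K : Type*} [Field K] (a : K) (g : K[X]) (D n : ℕ)
    (hn : 1 ≤ n) (hs : g.natDegree < D) :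
    ((C a * X ^ D + g) ^ n).coeff ((n - 1) * D + g.natDegree)
      = n * a ^ (n - 1) * g.leadingCoeff := by
  set s := g.natDegree with hs0
  rw [add_pow, finset_sum_coeff, Finset.sum_eq_single (n - 1)]
  · have h1 : n - (n - 1) = 1 := by omega
    have h2 : n.choose (n - 1) = n := by
      rw [← Nat.choose_symm (Nat.sub_le n 1), h1, Nat.choose_one_right]
    rw [h1, h2, pow_one, mul_pow, ← C_pow, ← pow_mul, mul_comm D (n - 1),
      mul_assoc, mul_assoc, coeff_C_mul, add_comm ((n - 1) * D) s,
      coeff_X_pow_mul, ← C_eq_natCast, mul_comm g, coeff_C_mul]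
    rw [Polynomial.leadingCoeff, ← hs0]
    ring
  · intro k hk hkne
    obtain hkeq | hkn := eq_or_ne k n
    · subst hkeq
      rw [Nat.sub_self, pow_zero, Nat.choose_self, Nat.cast_one, mul_one, mul_one,
        mul_pow, ← C_pow, ← pow_mul, coeff_C_mul, coeff_X_pow]
      obtain ⟨n', rfl⟩ : ∃ n', k = n' + 1 := ⟨k - 1, by omega⟩
      rw [if_neg, mul_zero]
      have hDn : D * (n' + 1) = n' * D + D := by ring
      have hnn : (n' + 1 - 1) * D = n' * D := by simp
      rw [hDn, hnn]
      omega
    · have hkmem := Finset.mem_range.mp hk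
      have hk2 : k ≤ n - 2 := by omega
      apply coeff_eq_zero_of_natDegree_lt
      have hb1 : (((C a * X ^ D) ^ k * g ^ (n - k)) * (n.choose k : K[X])).natDegree
          ≤ ((C a * X ^ D) ^ k).natDegree + (g ^ (n - k)).natDegree
            + ((n.choose k : K[X])).natDegree := by
        refine le_trans (natDegree_mul_le) ?_
        exact Nat.add_le_add_right natDegree_mul_le _
      have hb2 : ((C a * X ^ D) ^ k).natDegree ≤ k * D :=
        le_trans natDegree_pow_le (by
          exact Nat.mul_le_mul_left k (natDegree_C_mul_X_pow_le a D))
      have hb3 : (g ^ (n - k)).natDegree ≤ (n - k) * s :=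
        le_trans natDegree_pow_le (by rw [hs0])
      have hb4 : ((n.choose k : K[X])).natDegree = 0 := natDegree_natCast _
      have hlt : k * D + (n - k) * s + 0 < (n - 1) * D + s := by
        set d := n - 1 - k with hd
        have e1 : n - k = d + 1 := by omega
        have e2 : n - 1 = k + d := by omega
        have hd1 : 1 ≤ d := by omega
        have hds : d * s < d * D := by
          exact mul_lt_mul_of_pos_left hs (by omega)
        rw [e1, e2, add_mul, add_mul, one_mul]
        omega
      calc (((C a * X ^ D) ^ k * g ^ (n - k)) * (n.choose k : K[X])).natDegree
          ≤ ((C a * X ^ D) ^ k).natDegree + (g ^ (n - k)).natDegree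
            + ((n.choose k : K[X])).natDegree := hb1
        _ ≤ k * D + (n - k) * s + 0 := by
            refine add_le_add (add_le_add hb2 hb3) (le_of_eq hb4)
        _ < (n - 1) * D + s := hlt
  · intro h
    exact absurd (Finset.mem_range.mpr (by omega)) h

private lemma coeff_pow_bot {K : Type*} [Field K] (b : K) (g : K[X]) (t n : ℕ)
    (ht : 2 ≤ t) (hn : 1 ≤ n) (hlow : ∀ i, i < t → g.coeff i = 0) :
    ((C b * X + g) ^ n).coeff (n - 1 + t) = n * b ^ (n - 1) * g.coeff t := by
  have hXt : (X : K[X]) ^ t ∣ g := X_pow_dvd_iff.mpr hlow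
  rw [add_pow, finset_sum_coeff, Finset.sum_eq_single (n - 1)]
  · have h1 : n - (n - 1) = 1 := by omega
    have h2 : n.choose (n - 1) = n := by
      rw [← Nat.choose_symm (Nat.sub_le n 1), h1, Nat.choose_one_right]
    rw [h1, h2, pow_one, mul_pow, ← C_pow,
      mul_assoc, mul_assoc, coeff_C_mul, add_comm (n - 1) t,
      coeff_X_pow_mul, ← C_eq_natCast, mul_comm g, coeff_C_mul]
    ring
  · intro k hk hkne
    obtain hkeq | hkn := eq_or_ne k n
    · subst hkeq
      rw [Nat.sub_self, pow_zero, Nat.choose_self, Nat.cast_one, mul_one, mul_one,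
        mul_pow, ← C_pow, coeff_C_mul, coeff_X_pow, if_neg (by omega), mul_zero]
    · have hkmem := Finset.mem_range.mp hk
      have hk2 : k ≤ n - 2 := by omega
      rw [mul_pow, ← C_pow, mul_assoc, mul_assoc, coeff_C_mul]
      have hidx : n - 1 + t = (n - 1 - k + t) + k := by omega
      rw [hidx, coeff_X_pow_mul]
      have hdvd : (X : K[X]) ^ (t * (n - k)) ∣ g ^ (n - k) * (n.choose k : K[X]) := by
        refine dvd_mul_of_dvd_left ?_ _
        rw [pow_mul]
        exact pow_dvd_pow_of_dvd hXt (n - k)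
      have h0 : (g ^ (n - k) * (n.choose k : K[X])).coeff (n - 1 - k + t) = 0 := by
        refine X_pow_dvd_iff.mp hdvd _ ?_
        obtain ⟨u, hu⟩ : ∃ u, n - k = u + 1 := ⟨n - k - 1, by omega⟩
        have hu1 : 1 ≤ u := by omega
        have h5 : 2 * u ≤ t * u := Nat.mul_le_mul_right u ht
        have e2 : n - 1 - k = u := by omega
        rw [hu, Nat.mul_succ, e2]
        linarith
      rw [h0, mul_zero]
  · intro h
    exact absurd (Finset.mem_range.mpr (by omega)) h

private lemma digit_swap {K : Type*} [Field K] (p e q : ℕ) (hp : p.Prime) [CharP K p]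
    (hqe : q = p ^ e) (he : 0 < e)
    (F : K[X]) (hdegF : F.natDegree < q ^ 2)
    (hdvd : (X ^ q ^ 2 - X : K[X]) ∣ F ^ q - F)
    (a b : ℕ) (ha : a < q) (hb : b < q) :
    F.coeff (b + a * q) = (F.coeff (a + b * q)) ^ q := by
  haveI : Fact p.Prime := ⟨hp⟩
  have hq2 : 2 ≤ q := by
    rw [hqe]; exact Nat.one_lt_pow (by omega) hp.one_lt
  have hq0 : 0 < q := by omega
  have hqq : q ^ 2 = q * q := sq q
  have hq21 : 1 ≤ q ^ 2 := by rw [hqq]; nlinarith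
  -- R : the reduction of F^q
  set R : K[X] := ∑ j ∈ range (q ^ 2), C ((F.coeff j) ^ q) * X ^ ((j % q) * q + j / q)
    with hR
  -- F as a sum
  have hF : F = ∑ j ∈ range (q ^ 2), C (F.coeff j) * X ^ j := by
    conv_lhs => rw [F.as_sum_range' (q ^ 2) hdegF]
    exact Finset.sum_congr rfl fun j _ => (C_mul_X_pow_eq_monomial).symm
  have hFq : F ^ q = ∑ j ∈ range (q ^ 2), C ((F.coeff j) ^ q) * X ^ (j * q) := by
    calc F ^ q = (∑ j ∈ range (q ^ 2), C (F.coeff j) * X ^ j) ^ q := by rw [← hF]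
      _ = ∑ j ∈ range (q ^ 2), (C (F.coeff j) * X ^ j) ^ q := by
          haveI : ExpChar K[X] p := by infer_instance
          rw [hqe]
          exact sum_pow_char_pow (R := K[X]) (p := p) (n := e) _ _
      _ = ∑ j ∈ range (q ^ 2), C ((F.coeff j) ^ q) * X ^ (j * q) := by
          refine Finset.sum_congr rfl fun j _ => ?_
          rw [mul_pow, ← C_pow, ← pow_mul]
  -- divisibility of F^q - R
  have hdvd2 : (X ^ q ^ 2 - X : K[X]) ∣ F ^ q - R := by
    rw [hFq, hR, ← Finset.sum_sub_distrib]
    refine Finset.dvd_sum fun j hj => ?_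
    rw [← mul_sub]
    refine Dvd.dvd.mul_left ?_ _
    rcases Nat.eq_zero_or_pos j with rfl | hj1
    · simp
    · have hjq2 : j < q ^ 2 := Finset.mem_range.mp hj
      have hdq : j / q < q := by
        rw [Nat.div_lt_iff_lt_mul hq0]; rw [hqq] at hjq2; exact hjq2
      have hτpos : 1 ≤ (j % q) * q + j / q := by
        rcases Nat.eq_zero_or_pos (j % q) with h | h
        · have h1 : q ∣ j := Nat.dvd_of_mod_eq_zero h
          have h2 : q ≤ j := Nat.le_of_dvd hj1 h1
          have h3 : 1 ≤ j / q := Nat.one_le_div_iff hq0 |>.mpr h2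
          simpa [h] using h3
        · have h1 : q ≤ (j % q) * q := Nat.le_mul_of_pos_left q h
          exact le_trans (by omega) (Nat.le_add_right ((j % q) * q) (j / q))
      have hkey : j * q = ((j % q) * q + j / q) + (j / q) * (q ^ 2 - 1) := by
        have h1 : q * (j / q) + j % q = j := Nat.div_add_mod j q
        have e0 : q * q * (j / q) + (j % q) * q = j * q := by
          calc q * q * (j / q) + (j % q) * q = (q * (j / q) + j % q) * q := by ring
            _ = j * q := by rw [h1]
        have e1 : (j / q) * (q ^ 2 - 1) + j / q = (j / q) * q ^ 2 := by
          have h2 : q ^ 2 - 1 + 1 = q ^ 2 := by omega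
          calc (j / q) * (q ^ 2 - 1) + j / q = (j / q) * ((q ^ 2 - 1) + 1) := by ring
            _ = (j / q) * q ^ 2 := by rw [h2]
        have e2 : ((j % q) * q + j / q) + (j / q) * (q ^ 2 - 1)
            = (j % q) * q + (j / q) * q ^ 2 := by
          calc ((j % q) * q + j / q) + (j / q) * (q ^ 2 - 1)
              = (j % q) * q + ((j / q) * (q ^ 2 - 1) + j / q) := by ring
            _ = (j % q) * q + (j / q) * q ^ 2 := by rw [e1]
        rw [e2, ← e0, hqq]
        ring
      rw [hkey, pow_add, pow_mul']
      have hfac : (X : K[X]) ^ q ^ 2 - X = X * (X ^ (q ^ 2 - 1) - 1) := by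
        rw [mul_sub, mul_one, ← pow_succ']
        have h2 : q ^ 2 - 1 + 1 = q ^ 2 := by omega
        rw [h2]
      have hdvd3 : ((X : K[X]) ^ (q ^ 2 - 1) - 1) ∣ ((X ^ (q ^ 2 - 1)) ^ (j / q) - 1) := by
        have := sub_dvd_pow_sub_pow ((X : K[X]) ^ (q ^ 2 - 1)) 1 (j / q)
        rwa [one_pow] at this
      have hXdvd : (X : K[X]) ∣ X ^ ((j % q) * q + j / q) := dvd_pow_self X (Nat.one_le_iff_ne_zero.mp hτpos)
      have : (X : K[X]) ^ ((j % q) * q + j / q) * (X ^ (q ^ 2 - 1)) ^ (j / q)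
          - X ^ ((j % q) * q + j / q)
          = X ^ ((j % q) * q + j / q) * ((X ^ (q ^ 2 - 1)) ^ (j / q) - 1) := by ring
      rw [this, hfac]
      exact mul_dvd_mul hXdvd hdvd3
  -- R = F
  have hRF : R = F := by
    by_contra hne
    have hne' : R - F ≠ 0 := sub_ne_zero.mpr hne
    have hdvd4 : (X ^ q ^ 2 - X : K[X]) ∣ R - F := by
      have := dvd_sub hdvd hdvd2
      rwa [sub_sub_sub_cancel_left] at this
    have hdeg1 : ((X : K[X]) ^ q ^ 2 - X).natDegree = q ^ 2 := by
      have hqle : q ≤ q ^ 2 := by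
        rw [hqq]; exact Nat.le_mul_of_pos_left q hq0
      have hlt : (X : K[X]).natDegree < ((X : K[X]) ^ q ^ 2).natDegree := by
        rw [natDegree_X, natDegree_X_pow]
        omega
      rw [natDegree_sub_eq_left_of_natDegree_lt hlt, natDegree_X_pow]
    have hτle : ∀ j ∈ range (q ^ 2), (C ((F.coeff j) ^ q) * X ^ ((j % q) * q + j / q)).natDegree
        ≤ q ^ 2 - 1 := by
      intro j hj
      refine le_trans (natDegree_C_mul_X_pow_le _ _) ?_
      have h1 : j % q ≤ q - 1 := by have := Nat.mod_lt j hq0; omega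
      have h2 : j / q ≤ q - 1 := by
        have hjlt : j < q * q := by rw [← hqq]; exact Finset.mem_range.mp hj
        have : j / q < q := (Nat.div_lt_iff_lt_mul hq0).mpr hjlt
        omega
      have h3 : (j % q) * q ≤ (q - 1) * q := Nat.mul_le_mul_right q h1
      have h4 : (q - 1) * q + q = q * q := by
        obtain ⟨q', rfl⟩ : ∃ q', q = q' + 1 := ⟨q - 1, by omega⟩
        simp
        ring
      have h5 : q * q = q ^ 2 := (sq q).symm
      have h6 : q ^ 2 - 1 + 1 = q ^ 2 := by omega
      have h7 : q - 1 + 1 = q := by omega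
      linarith
    have hdegR : R.natDegree ≤ q ^ 2 - 1 := by
      rw [hR]
      exact natDegree_sum_le_of_forall_le _ _ hτle
    have hdegF' : F.natDegree ≤ q ^ 2 - 1 := by omega
    have h5 : q ^ 2 ≤ (R - F).natDegree := by
      rw [← hdeg1]; exact natDegree_le_of_dvd hdvd4 hne'
    have h6 : (R - F).natDegree ≤ q ^ 2 - 1 :=
      le_trans (natDegree_sub_le R F) (max_le hdegR hdegF')
    omega
  -- extract coefficient
  have hmem : a + b * q ∈ range (q ^ 2) := by
    refine Finset.mem_range.mpr ?_
    have h1 : (b + 1) * q ≤ q * q := Nat.mul_le_mul_right q (by omega)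
    have h2 : (b + 1) * q = b * q + q := by ring
    have h5 : q * q = q ^ 2 := (sq q).symm
    linarith
  have := hRF
  rw [hR] at this
  have hcoeff : F.coeff (b + a * q)
      = ∑ j ∈ range (q ^ 2), (C ((F.coeff j) ^ q) * X ^ ((j % q) * q + j / q)).coeff
          (b + a * q) := by
    conv_lhs => rw [← this]
    rw [finset_sum_coeff]
  rw [hcoeff]
  rw [Finset.sum_eq_single (a + b * q)]
  · rw [coeff_C_mul, coeff_X_pow]
    have hmod : (a + b * q) % q = a := by
      rw [Nat.add_mul_mod_self_right, Nat.mod_eq_of_lt ha]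
    have hdiv : (a + b * q) / q = b := by
      rw [Nat.add_mul_div_right _ _ hq0, Nat.div_eq_of_lt ha, zero_add]
    rw [hmod, hdiv, if_pos (by omega), mul_one]
  · intro j hj hjne
    rw [coeff_C_mul, coeff_X_pow, if_neg, mul_zero]
    intro hEq
    apply hjne
    have hjq2 : j < q ^ 2 := Finset.mem_range.mp hj
    have hdq : j / q < q := by
      rw [Nat.div_lt_iff_lt_mul hq0]; rw [hqq] at hjq2; exact hjq2
    have hr : j % q < q := Nat.mod_lt j hq0
    -- hEq : b + a * q = (j % q) * q + j / q
    have hra : j % q = a ∧ j / q = b := by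
      rcases lt_trichotomy (j % q) a with hlt | heq | hgt
      · exfalso
        have h1 : (j % q + 1) * q ≤ a * q := Nat.mul_le_mul_right q (by omega)
        rw [add_mul, one_mul] at h1
        -- b + a*q = (j%q)*q + j/q, j/q < q
        have := hEq
        linarith [hdq, Nat.zero_le b]
      · refine ⟨heq, ?_⟩
        rw [heq] at hEq
        linarith
      · exfalso
        have h1 : (a + 1) * q ≤ (j % q) * q := Nat.mul_le_mul_right q (by omega)
        rw [add_mul, one_mul] at h1
        linarith [hb, Nat.zero_le (j / q)]
    have hj' := Nat.div_add_mod j q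
    rw [hra.1, hra.2] at hj'
    rw [← hj']
    ring
  · intro h
    exact absurd hmem h

/-- Let `p` be a prime, `q` a power of `p`, and `K` a finite field with `q^2`
elements. Let `n, m` be positive integers with `n·m = q+1` and `m ≥ 2`. Let
`f ∈ K[Y]` be a squarefree polynomial of degree `q` with `f(0) = 0` such that
`Y^(q^2) - Y` divides `f^n - f^(n·q)`. Then `f = a₁·Y + a_q·Y^q` with
`a₁, a_q ∈ K` nonzero; i.e. `coeff f i = 0` for `2 ≤ i ≤ q-1` while the
coefficients of `Y` and `Y^q` are nonzero. -/
theorem squarefree_poly_with_frobenius_congruence_is_binomial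
    (p q n m : ℕ) (hp : p.Prime) (hq : ∃ e : ℕ, 0 < e ∧ q = p ^ e)
    (K : Type*) [Field K] [Fintype K] (hK : Fintype.card K = q ^ 2)
    (hn : 0 < n) (hm : 2 ≤ m) (hnm : n * m = q + 1)
    (f : K[X]) (hsf : Squarefree f) (hdeg : f.natDegree = q)
    (hf0 : f.coeff 0 = 0)
    (hdvd : (X ^ q ^ 2 - X : K[X]) ∣ f ^ n - f ^ (n * q)) :
    (∀ i : ℕ, 2 ≤ i → i ≤ q - 1 → f.coeff i = 0) ∧
    f.coeff 1 ≠ 0 ∧ f.coeff q ≠ 0 := by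
  classical
  obtain ⟨e, he, hqe⟩ := hq
  have hq2 : 2 ≤ q := by
    rw [hqe]; exact Nat.one_lt_pow (by omega) hp.one_lt
  have hq0 : 0 < q := by omega
  have hfne : f ≠ 0 := by
    intro h
    rw [h, natDegree_zero] at hdeg
    omega
  have hcq : f.coeff q ≠ 0 := by
    rw [← hdeg, coeff_natDegree]
    exact leadingCoeff_ne_zero.mpr hfne
  have hc1 : f.coeff 1 ≠ 0 := by
    intro h1
    have hdvd2 : (X : K[X]) ^ 2 ∣ f := by
      refine X_pow_dvd_iff.mpr fun d hd => ?_
      interval_cases d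
      · exact hf0
      · exact h1
    rw [pow_two] at hdvd2
    exact Polynomial.not_isUnit_X (hsf X hdvd2)
  -- characteristic
  haveI hchar : CharP K p := by
    obtain ⟨k, hrp, hk⟩ := FiniteField.card K (ringChar K)
    have hrprime : (ringChar K).Prime := hrp
    have hcard : Fintype.card K = p ^ (2 * e) := by
      rw [hK, hqe, ← pow_mul, mul_comm e 2]
    have hdvd' : ringChar K ∣ p ^ (2 * e) := by
      rw [← hcard, hk]
      exact dvd_pow_self _ (by exact_mod_cast k.ne_zero)
    have : ringChar K = p :=
      (Nat.prime_dvd_prime_iff_eq hrprime hp).mp (hrprime.dvd_of_dvd_pow hdvd')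
    rw [← this]
    exact ringChar.charP K
  have hnK : (n : K) ≠ 0 := by
    rw [Ne, CharP.cast_eq_zero_iff K p]
    intro hpn
    have h1 : p ∣ q + 1 := by
      rw [← hnm]; exact hpn.mul_right m
    have h2 : p ∣ q := by rw [hqe]; exact dvd_pow_self p he.ne'
    have h3 : p ∣ 1 := by
      have := Nat.dvd_sub h1 h2
      simpa using this
    have := Nat.le_of_dvd one_pos h3
    have := hp.two_le
    omega
  have h2n : 2 * n ≤ q + 1 := by
    have : 2 * n ≤ m * n := Nat.mul_le_mul_right n hm
    rw [mul_comm m n, hnm] at this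
    exact this
  have hnq : n * q < q ^ 2 := by
    have hqq : q ^ 2 = q * q := sq q
    nlinarith
  have hdegF : (f ^ n).natDegree = n * q := by
    rw [natDegree_pow, hdeg]
  have hdvdF : (X ^ q ^ 2 - X : K[X]) ∣ (f ^ n) ^ q - f ^ n := by
    have heq : (f ^ n) ^ q - f ^ n = -(f ^ n - f ^ (n * q)) := by
      rw [← pow_mul]; ring
    rw [heq]
    exact (dvd_neg).mpr hdvd
  refine ⟨?_, hc1, hcq⟩
  intro i hi2 hiq
  by_contra hci
  -- t' : the smallest middle exponent
  have hex : ∃ j, 2 ≤ j ∧ f.coeff j ≠ 0 := ⟨i, hi2, hci⟩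
  set t' := Nat.find hex with ht'def
  obtain ⟨ht'2, hct'⟩ := Nat.find_spec hex
  have ht'le : t' ≤ i := Nat.find_le ⟨hi2, hci⟩
  have ht'q : t' ≤ q - 1 := le_trans ht'le hiq
  -- t : the largest nonzero exponent below q
  have htge' : t' ≤ Nat.findGreatest (fun j => f.coeff j ≠ 0) (q - 1) :=
    Nat.le_findGreatest (P := fun j => f.coeff j ≠ 0) ht'q hct'
  have hct0 : f.coeff (Nat.findGreatest (fun j => f.coeff j ≠ 0) (q - 1)) ≠ 0 :=
    Nat.findGreatest_spec (P := fun j => f.coeff j ≠ 0) ht'q hct'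
  have htq0 : Nat.findGreatest (fun j => f.coeff j ≠ 0) (q - 1) ≤ q - 1 :=
    Nat.findGreatest_le (P := fun j => f.coeff j ≠ 0) (q - 1)
  have hgt0 : ∀ j, Nat.findGreatest (fun j => f.coeff j ≠ 0) (q - 1) < j → j ≤ q - 1 →
      f.coeff j = 0 := by
    intro j h1 h2
    have := Nat.findGreatest_is_greatest (P := fun j => f.coeff j ≠ 0) h1 h2
    simpa using this
  set t := Nat.findGreatest (fun j => f.coeff j ≠ 0) (q - 1) with htdef
  have htge : t' ≤ t := htge'
  have hct : f.coeff t ≠ 0 := hct0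
  have htq : t ≤ q - 1 := htq0
  have hgt : ∀ j, t < j → j ≤ q - 1 → f.coeff j = 0 := hgt0
  have ht2 : 2 ≤ t := le_trans ht'2 htge
  -- the top part : g₂
  set g₂ := f - C (f.coeff q) * X ^ q with hg2
  have hfg2 : f = C (f.coeff q) * X ^ q + g₂ := by rw [hg2]; ring
  have hg2coeff : ∀ j, g₂.coeff j = f.coeff j - if j = q then f.coeff q else 0 := by
    intro j
    rw [hg2, coeff_sub, coeff_C_mul, coeff_X_pow]
    by_cases h : j = q
    · rw [if_pos h, if_pos (by omega), mul_one]
    · rw [if_neg (by omega), if_neg h, mul_zero]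
  have hg2t : g₂.coeff t = f.coeff t := by
    rw [hg2coeff, if_neg (by omega), sub_zero]
  have hg2deg : g₂.natDegree = t := by
    apply le_antisymm
    · rw [natDegree_le_iff_coeff_eq_zero]
      intro j hj
      rcases lt_trichotomy j q with h | h | h
      · rw [hg2coeff, if_neg (by omega), sub_zero]
        exact hgt j hj (by omega)
      · rw [hg2coeff, if_pos h, h, sub_self]
      · rw [hg2coeff, if_neg (by omega), sub_zero]
        exact coeff_eq_zero_of_natDegree_lt (by rw [hdeg]; exact h)
    · exact le_natDegree_of_ne_zero (by rw [hg2t]; exact hct)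
  -- top coefficient computation
  have hTop : (f ^ n).coeff ((n - 1) * q + t) = n * (f.coeff q) ^ (n - 1) * f.coeff t := by
    have hlt : g₂.natDegree < q := by rw [hg2deg]; omega
    have := coeff_pow_top (f.coeff q) g₂ q n hn hlt
    rw [hg2deg] at this
    have hlc : g₂.leadingCoeff = f.coeff t := by
      rw [Polynomial.leadingCoeff, hg2deg, hg2t]
    rw [hlc] at this
    calc (f ^ n).coeff ((n - 1) * q + t)
        = ((C (f.coeff q) * X ^ q + g₂) ^ n).coeff ((n - 1) * q + t) := by rw [← hfg2]
      _ = n * (f.coeff q) ^ (n - 1) * f.coeff t := this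
  have hTopne : (f ^ n).coeff ((n - 1) * q + t) ≠ 0 := by
    rw [hTop]
    exact mul_ne_zero (mul_ne_zero hnK (pow_ne_zero _ hcq)) hct
  -- first digit swap : t ≤ n - 1 and n ≥ 2
  have hnleq : n ≤ q := by omega
  have hswap1 := digit_swap p e q hp hqe he (f ^ n) (by rw [hdegF]; exact hnq) hdvdF
    t (n - 1) (by omega) (by omega)
  have hne1 : (f ^ n).coeff ((n - 1) + t * q) ≠ 0 := by
    rw [hswap1]
    apply pow_ne_zero
    rwa [add_comm ((n - 1) * q) t] at hTopne
  have hle1 : (n - 1) + t * q ≤ n * q := by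
    by_contra hgt1
    exact hne1 (coeff_eq_zero_of_natDegree_lt (by rw [hdegF]; omega))
  have htn : t ≤ n - 1 ∧ 2 ≤ n := by
    rcases le_or_gt n t with h | h
    · exfalso
      have h1 : n * q ≤ t * q := Nat.mul_le_mul_right q h
      have hn1 : n = 1 := by omega
      rw [hn1, one_mul] at hle1
      have h2 : 2 * q ≤ t * q := Nat.mul_le_mul_right q ht2
      omega
    · exact ⟨by omega, by omega⟩
  -- the bottom part : g₁
  set g₁ := f - C (f.coeff 1) * X with hg1
  have hfg1 : f = C (f.coeff 1) * X + g₁ := by rw [hg1]; ring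
  have hg1coeff : ∀ j, g₁.coeff j = f.coeff j - if j = 1 then f.coeff 1 else 0 := by
    intro j
    rw [hg1, coeff_sub]
    conv_lhs => rw [show (X : K[X]) = X ^ 1 from (pow_one X).symm]
    rw [coeff_C_mul, coeff_X_pow]
    by_cases h : j = 1
    · rw [if_pos (by omega), if_pos h, mul_one]
    · rw [if_neg (by omega), if_neg h, mul_zero]
  have hlow : ∀ j, j < t' → g₁.coeff j = 0 := by
    intro j hj
    rcases Nat.lt_or_ge j 2 with h2 | h2
    · interval_cases j
      · rw [hg1coeff, if_neg (by omega), sub_zero]; exact hf0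
      · rw [hg1coeff, if_pos rfl, sub_self]
    · have hmin := Nat.find_min hex hj
      rw [ht'def] at hj
      have : f.coeff j = 0 := by
        by_contra hne
        exact hmin ⟨h2, hne⟩
      rw [hg1coeff, if_neg (by omega), sub_zero]
      exact this
  have hg1t' : g₁.coeff t' = f.coeff t' := by
    rw [hg1coeff, if_neg (by omega), sub_zero]
  have hBot : (f ^ n).coeff (n - 1 + t') = n * (f.coeff 1) ^ (n - 1) * f.coeff t' := by
    have := coeff_pow_bot (f.coeff 1) g₁ t' n ht'2 hn hlow
    rw [hg1t'] at this
    calc (f ^ n).coeff (n - 1 + t')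
        = ((C (f.coeff 1) * X + g₁) ^ n).coeff (n - 1 + t') := by rw [← hfg1]
      _ = n * (f.coeff 1) ^ (n - 1) * f.coeff t' := this
  have hBotne : (f ^ n).coeff (n - 1 + t') ≠ 0 := by
    rw [hBot]
    exact mul_ne_zero (mul_ne_zero hnK (pow_ne_zero _ hc1)) hct'
  -- second digit swap : contradiction
  have hb2 : n - 1 + t' < q := by omega
  have hswap2 := digit_swap p e q hp hqe he (f ^ n) (by rw [hdegF]; exact hnq) hdvdF
    (n - 1 + t') 0 hb2 hq0
  have hne2 : (f ^ n).coeff (0 + (n - 1 + t') * q) ≠ 0 := by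
    rw [hswap2]
    apply pow_ne_zero
    simpa using hBotne
  have hle2 : (n - 1 + t') * q ≤ n * q := by
    by_contra hgt2
    refine hne2 (coeff_eq_zero_of_natDegree_lt ?_)
    rw [hdegF]
    omega
  have hfin : n - 1 + t' ≤ n := Nat.le_of_mul_le_mul_right hle2 hq0
  omega
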